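/- arXiv:math/0603200 — 3 statements merged into one kernel-verified Lean document; each statement's English description precedes it below -/
import Mathlib

section
/- Let T be a commutative ring with an ideal I such that I/I² is finitely generated as a T/I-module, and let T̂ be the I-adic completion of T. If f₁,…,f_d ∈ I are lifts of generators of I/I², then the images of f₁,…,f_d in T̂ generate the ideal I·T̂; in particular T̂ is an adic ring with finitely generated ideal of definition I·T̂. -/
open Pointwise
open Submodule

section Stmt1Aux

variable {T : Type*} [CommRing T]

lemma stmt1_prod_mem_pow {A : Type*} [CommRing A] (J : Ideal A) :
    ∀ (n : ℕ) (a : Fin n → A), (∀ j, a j ∈ J) → (∏ j, a j) ∈ J ^ n := by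
  intro n
  induction n with
  | zero => intro a _; simp
  | succ n ih =>
    intro a ha
    rw [Fin.prod_univ_castSucc, pow_succ]
    exact Ideal.mul_mem_mul (ih _ fun j => ha _) (ha _)

lemma stmt1_span_pow (d : ℕ) (f : Fin d → T) :
    ∀ n : ℕ, Ideal.span (Set.range f) ^ n ≤
      Ideal.span (Set.range fun v : Fin n → Fin d => ∏ j, f (v j)) := by
  intro n
  induction n with
  | zero =>
    rw [pow_zero, Ideal.one_eq_top]
    have h1 : (1 : T) ∈ Ideal.span (Set.range fun v : Fin 0 → Fin d => ∏ j, f (v j)) :=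
      Ideal.subset_span ⟨fun j => j.elim0, by simp⟩
    rw [(Ideal.eq_top_iff_one _).mpr h1]
  | succ n ih =>
    rw [pow_succ]
    calc Ideal.span (Set.range f) ^ n * Ideal.span (Set.range f)
        ≤ Ideal.span (Set.range fun v : Fin n → Fin d => ∏ j, f (v j)) *
            Ideal.span (Set.range f) := Ideal.mul_mono_left ih
      _ = Ideal.span ((Set.range fun v : Fin n → Fin d => ∏ j, f (v j)) *
            Set.range f) := (Ideal.span_mul_span' _ _)
      _ ≤ Ideal.span (Set.range fun v : Fin (n+1) → Fin d => ∏ j, f (v j)) := by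
          apply Ideal.span_le.mpr
          rintro _ ⟨_, ⟨v, rfl⟩, _, ⟨i, rfl⟩, rfl⟩
          refine Ideal.subset_span ⟨Fin.snoc v i, ?_⟩
          simp only [Fin.prod_univ_castSucc, Fin.snoc_castSucc, Fin.snoc_last]

lemma stmt1_main_aux (I : Ideal T) (d : ℕ) (f : Fin d → T) (hf : ∀ i, f i ∈ I)
    (hgen : I ≤ Ideal.span (Set.range f) ⊔ I ^ 2) (n : ℕ) (x : AdicCompletion I T)
    (hx : x.val n = 0) :
    x ∈ Ideal.span (Set.range fun i => algebraMap T (AdicCompletion I T) (f i)) ^ n := by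
  classical
  set K := Ideal.span (Set.range f) with hK
  have hKI : K ≤ I := Ideal.span_le.mpr (by rintro _ ⟨i, rfl⟩; exact hf i)
  -- degree 1 approximation to arbitrary order
  have h1 : ∀ m : ℕ, I ≤ K ⊔ I ^ (m + 2) := by
    intro m
    induction m with
    | zero => simpa using hgen
    | succ m ih =>
      have h2 : I ^ 2 ≤ K ⊔ I ^ (m + 3) := by
        rw [sq]
        calc I * I ≤ I * (K ⊔ I ^ (m + 2)) := Ideal.mul_mono_right ih
          _ = I * K ⊔ I * I ^ (m + 2) := Ideal.mul_sup _ _ _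
          _ ≤ K ⊔ I ^ (m + 3) := by
              apply sup_le_sup Ideal.mul_le_right
              rw [← pow_succ']
      exact hgen.trans (sup_le le_sup_left h2)
  -- degree n approximation
  have h2 : ∀ k : ℕ, I ^ k ≤ K ^ k ⊔ I ^ (k + 1) := by
    intro k
    induction k with
    | zero => simp
    | succ k ih =>
      rw [pow_succ]
      calc I ^ k * I ≤ (K ^ k ⊔ I ^ (k + 1)) * (K ⊔ I ^ (k + 2)) :=
            Ideal.mul_mono ih (h1 k)
        _ = K ^ k * K ⊔ K ^ k * I ^ (k+2) ⊔ (I ^ (k+1) * K ⊔ I ^ (k+1) * I ^ (k+2)) := by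
            rw [Ideal.sup_mul, Ideal.mul_sup, Ideal.mul_sup]
        _ ≤ K ^ (k+1) ⊔ I ^ (k+2) := by
            apply sup_le (sup_le _ _) (sup_le _ _)
            · rw [← pow_succ]; exact le_sup_left
            · exact le_sup_of_le_right Ideal.mul_le_right
            · refine le_sup_of_le_right ?_
              calc I ^ (k+1) * K ≤ I ^ (k+1) * I := Ideal.mul_mono_right hKI
                _ = I ^ (k+2) := (pow_succ I (k+1)).symm
            · exact le_sup_of_le_right Ideal.mul_le_right
  -- monomials of degree n
  set g : (Fin n → Fin d) → T := fun v => ∏ j, f (v j) with hg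
  have hKg : K ^ n ≤ Ideal.span (Set.range g) := stmt1_span_pow d f n
  -- decomposition step
  have step : ∀ (j : ℕ) (u : T), u ∈ I ^ (n + j) →
      ∃ (c : (Fin n → Fin d) → T) (u' : T), (∀ v, c v ∈ I ^ j) ∧ u' ∈ I ^ (n + j + 1) ∧
        u = (∑ v, c v * g v) + u' := by
    intro j u hu
    have hmem : u ∈ I ^ j • (Ideal.span (Set.range g)) ⊔ I ^ (n + j + 1) := by
      have : I ^ (n + j) ≤ I ^ j • (Ideal.span (Set.range g)) ⊔ I ^ (n + j + 1) := by
        rw [smul_eq_mul]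
        calc I ^ (n + j) = I ^ n * I ^ j := by rw [← pow_add]
          _ ≤ (K ^ n ⊔ I ^ (n+1)) * I ^ j := Ideal.mul_mono_left (h2 n)
          _ = K ^ n * I ^ j ⊔ I ^ (n+1) * I ^ j := Ideal.sup_mul _ _ _
          _ ≤ I ^ j * Ideal.span (Set.range g) ⊔ I ^ (n + j + 1) := by
              apply sup_le_sup
              · rw [mul_comm]; exact Ideal.mul_mono_right hKg
              · rw [← pow_add]
                exact le_of_eq (by ring_nf)
      exact this hu
    obtain ⟨p, hp, u', hu', rfl⟩ := Submodule.mem_sup.mp hmem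
    obtain ⟨a, ha, hsuma⟩ :=
      (Submodule.mem_ideal_smul_span_iff_exists_sum (I ^ j) g p).mp hp
    refine ⟨fun v => a v, u', fun v => ha v, hu', ?_⟩
    have hps : (∑ v, a v * g v) = p := by
      rw [← hsuma, Finsupp.sum_fintype _ _ (by intro i; exact zero_smul T (g i))]
      simp [smul_eq_mul]
    rw [hps]
  choose c' u' hc hu' heq using step
  -- representative Cauchy sequence
  obtain ⟨t, rfl⟩ := AdicCompletion.mk_surjective I T x
  have hsmt : ∀ m : ℕ, ((I ^ m • ⊤ : Ideal T) : Submodule T T) = I ^ m := by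
    intro m; ext y; simp
  have htn : t.val n ∈ I ^ (n + 0) := by
    have : (AdicCompletion.mk I T t).val n = Submodule.mkQ (I ^ n • ⊤ : Submodule T T) (t.val n) := rfl
    rw [this] at hx
    have h := (Submodule.Quotient.mk_eq_zero _).mp hx
    rw [hsmt] at h
    simpa using h
  have hδ : ∀ j : ℕ, t.val (n + j + 1) - t.val (n + j) ∈ I ^ (n + j) := by
    intro j
    have := t.property (show n + j ≤ n + j + 1 by omega)
    have := (SModEq.sub_mem.mp this.symm)
    rwa [hsmt] at this
  -- recursive construction of remainders
  let u : ∀ j : ℕ, {w : T // w ∈ I ^ (n + j)} := fun j =>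
    Nat.rec ⟨t.val n, htn⟩
      (fun j uj => ⟨u' j (uj.1 + (t.val (n+j+1) - t.val (n+j))) (add_mem uj.2 (hδ j)),
        hu' j _ _⟩) j
  let cj : ℕ → (Fin n → Fin d) → T := fun j =>
    c' j ((u j).1 + (t.val (n+j+1) - t.val (n+j))) (add_mem (u j).2 (hδ j))
  have hcj : ∀ j v, cj j v ∈ I ^ j := fun j v => hc j _ _ v
  have hrec : ∀ j, (u j).1 + (t.val (n+j+1) - t.val (n+j))
      = (∑ v, cj j v * g v) + (u (j+1)).1 := fun j => heq j _ _
  have hsum : ∀ m, t.val (n + m) = (∑ v, (∑ j ∈ Finset.range m, cj j v) * g v) + (u m).1 := by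
    intro m
    induction m with
    | zero => simp [u]
    | succ m ih =>
      show t.val (n + m + 1) = _
      calc t.val (n + m + 1)
          = t.val (n + m) + (t.val (n+m+1) - t.val (n+m)) := by ring
        _ = (∑ v, (∑ j ∈ Finset.range m, cj j v) * g v) +
              ((u m).1 + (t.val (n+m+1) - t.val (n+m))) := by rw [ih]; ring
        _ = (∑ v, (∑ j ∈ Finset.range m, cj j v) * g v) +
              ((∑ v, cj m v * g v) + (u (m+1)).1) := by rw [hrec m]
        _ = (∑ v, ((∑ j ∈ Finset.range m, cj j v) * g v + cj m v * g v)) + (u (m+1)).1 := by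
              rw [Finset.sum_add_distrib]; ring
        _ = (∑ v, (∑ j ∈ Finset.range (m+1), cj j v) * g v) + (u (m+1)).1 := by
              refine congrArg (· + (u (m+1)).1) (Finset.sum_congr rfl fun v _ => ?_)
              rw [Finset.sum_range_succ, add_mul]
  -- coefficient Cauchy sequences
  have hCC : ∀ v (m : ℕ), (∑ j ∈ Finset.range m, cj j v) ≡
      (∑ j ∈ Finset.range (m+1), cj j v) [SMOD (I ^ m • ⊤ : Submodule T T)] := by
    intro v m
    rw [SModEq.sub_mem, hsmt, Finset.sum_range_succ]
    have : (∑ j ∈ Finset.range m, cj j v) - ((∑ j ∈ Finset.range m, cj j v) + cj m v)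
        = -(cj m v) := by ring
    rw [this]
    exact neg_mem (hcj m v)
  let Cseq : (Fin n → Fin d) → AdicCompletion.AdicCauchySequence I T := fun v =>
    ⟨fun m => ∑ j ∈ Finset.range m, cj j v,
      (AdicCompletion.isAdicCauchy_iff I T _).mpr (hCC v)⟩
  let γ : (Fin n → Fin d) → AdicCompletion I T := fun v => AdicCompletion.mk I T (Cseq v)
  -- the identity
  have hxeq : AdicCompletion.mk I T t =
      ∑ v, γ v * (algebraMap T (AdicCompletion I T)) (g v) := by
    apply AdicCompletion.ext
    intro m
    rw [AdicCompletion.val_sum]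
    have lhs : (AdicCompletion.mk I T t).val m
        = Ideal.Quotient.mk (I ^ m • ⊤ : Ideal T) (t.val m) := rfl
    have rhs : ∀ v, (γ v * (algebraMap T (AdicCompletion I T)) (g v)).val m =
        Ideal.Quotient.mk (I ^ m • ⊤ : Ideal T) ((∑ j ∈ Finset.range m, cj j v) * g v) := by
      intro v
      rw [AdicCompletion.val_mul]
      have hA : (γ v).val m = Ideal.Quotient.mk (I ^ m • ⊤ : Ideal T)
          (∑ j ∈ Finset.range m, cj j v) := rfl
      have hB : ((algebraMap T (AdicCompletion I T)) (g v)).val m =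
          Ideal.Quotient.mk (I ^ m • ⊤ : Ideal T) (g v) := rfl
      rw [hA, hB, ← map_mul]
    rw [lhs, Finset.sum_apply, Finset.sum_congr rfl (fun v _ => rhs v), ← map_sum]
    have e4 : (∑ v, (∑ j ∈ Finset.range m, cj j v) * g v) = t.val (n + m) - (u m).1 := by
      rw [hsum m]; ring
    rw [e4, map_sub]
    have e5 : Ideal.Quotient.mk (I ^ m • ⊤ : Ideal T) ((u m).1) = 0 := by
      rw [Ideal.Quotient.eq_zero_iff_mem]
      have : (u m).1 ∈ I ^ m := by
        have := (u m).2
        exact Ideal.pow_le_pow_right (by omega) this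
      rw [hsmt]; exact this
    rw [e5, sub_zero]
    have e6 := t.property (show m ≤ n + m by omega)
    rw [← Ideal.Quotient.mk_eq_mk, ← Ideal.Quotient.mk_eq_mk]
    exact SModEq.def.mp e6
  rw [hxeq]
  apply Ideal.sum_mem
  intro v _
  apply Ideal.mul_mem_left
  have : (algebraMap T (AdicCompletion I T)) (g v) =
      ∏ j, (algebraMap T (AdicCompletion I T)) (f (v j)) := by
    rw [hg]; exact map_prod _ _ _
  rw [this]
  exact stmt1_prod_mem_pow _ n _ (fun j => Ideal.subset_span ⟨v j, rfl⟩)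

end Stmt1Aux

/-- If `I/I²` is finitely generated, with `f₁,…,f_d ∈ I` lifting generators of `I/I²`, then the
images of the `f i` in the `I`-adic completion `T̂` generate the ideal `I·T̂`; in particular `T̂`
is adic (complete and separated) with the finitely generated ideal of definition `I·T̂`. -/
theorem stmt1 {T : Type*} [CommRing T] (I : Ideal T) (d : ℕ) (f : Fin d → T)
    (hf : ∀ i, f i ∈ I)
    (hgen : I ≤ Ideal.span (Set.range f) ⊔ I ^ 2) :
    Ideal.map (algebraMap T (AdicCompletion I T)) I =
      Ideal.span (Set.range fun i => algebraMap T (AdicCompletion I T) (f i)) ∧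
    IsAdicComplete (Ideal.map (algebraMap T (AdicCompletion I T)) I) (AdicCompletion I T) := by
  set A := AdicCompletion I T
  set φ := algebraMap T A with hφ
  set J := Ideal.span (Set.range fun i => φ (f i)) with hJ
  have hsmt : ∀ m : ℕ, ((I ^ m • ⊤ : Ideal T) : Submodule T T) = I ^ m := by
    intro m; ext y; simp
  have hmap : Ideal.map φ I = J := by
    apply le_antisymm
    · rw [Ideal.map_le_iff_le_comap]
      intro a ha
      have hval : (φ a).val 1 = 0 := by
        show Submodule.mkQ (I ^ 1 • ⊤ : Submodule T T) a = 0
        rw [Submodule.mkQ_apply, Submodule.Quotient.mk_eq_zero, hsmt, pow_one]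
        exact ha
      have := stmt1_main_aux I d f hf hgen 1 (φ a) hval
      rw [pow_one] at this
      exact this
    · rw [hJ, Ideal.span_le]
      rintro _ ⟨i, rfl⟩
      exact Ideal.mem_map_of_mem φ (hf i)
  refine ⟨hmap, ?_⟩
  rw [hmap]
  -- J^k kills the k-th component
  have hker : ∀ (k : ℕ) (y : A), y ∈ J ^ k → y.val k = 0 := by
    intro k
    let e : A →+* T ⧸ (I ^ k • ⊤ : Ideal T) :=
      { toFun := fun y => y.val k
        map_one' := rfl
        map_mul' := fun _ _ => rfl
        map_zero' := rfl
        map_add' := fun _ _ => rfl }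
    have hJk : J ^ k ≤ RingHom.ker e := by
      rw [← hmap, ← Ideal.map_pow, Ideal.map_le_iff_le_comap]
      intro a ha
      rw [Ideal.mem_comap, RingHom.mem_ker]
      show (φ a).val k = 0
      show Submodule.mkQ (I ^ k • ⊤ : Submodule T T) a = 0
      rw [Submodule.mkQ_apply, Submodule.Quotient.mk_eq_zero, hsmt]
      exact ha
    intro y hy
    exact hJk hy
  have hst : ∀ k : ℕ, ((J ^ k • ⊤ : Ideal A) : Submodule A A) = J ^ k := by
    intro k; ext y; simp
  refine { toIsHausdorff := ⟨?_⟩, toIsPrecomplete := ⟨?_⟩ }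
  · intro x hx
    apply AdicCompletion.ext
    intro k
    have := (SModEq.zero.mp (hx k))
    rw [hst] at this
    rw [hker k x this]
    rfl
  · intro s hs
    have hdiff : ∀ {m k : ℕ}, m ≤ k → (s k - s m).val m = 0 := by
      intro m k h
      apply hker m
      have := SModEq.sub_mem.mp (hs h)
      rw [hst] at this
      have h2 : s k - s m = -(s m - s k) := by ring
      rw [h2]
      exact neg_mem this
    have hcompat : ∀ {m k : ℕ} (hmk : m ≤ k),
        AdicCompletion.transitionMap I T hmk ((s k).val k) = (s m).val m := by
      intro m k hmk
      have h1 : AdicCompletion.transitionMap I T hmk ((s k).val k) = (s k).val m :=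
        AdicCompletion.transitionMap_comp_eval_apply I T hmk (s k)
      rw [h1]
      have h2 := hdiff hmk
      rw [AdicCompletion.val_sub] at h2
      exact sub_eq_zero.mp h2
    refine ⟨⟨fun k => (s k).val k, hcompat⟩, fun k => ?_⟩
    refine SModEq.sub_mem.mpr ?_
    rw [hst]
    have hval : (s k - ⟨fun k => (s k).val k, hcompat⟩).val k = 0 := by
      exact sub_self ((s k).val k)
    exact stmt1_main_aux I d f hf hgen k _ hval
end

section
/- Let T be a commutative ring with a finitely generated ideal I, M a T-module, and let M̂, T̂ denote I-adic completions. Then the canonical map M/IⁿM → M̂/IⁿM̂ is an isomorphism for every n ≥ 1. -/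
/-- Decompose an element of `span s • N` as a finite sum over generators. -/
lemma span_finset_smul_decomp {T : Type*} [CommRing T] {M : Type*} [AddCommGroup M]
    [Module T M] (s : Finset T) (N : Submodule T M) {x : M}
    (hx : x ∈ Ideal.span (s : Set T) • N) :
    ∃ w : T → M, (∀ g ∈ s, w g ∈ N) ∧ x = ∑ g ∈ s, g • w g := by
  refine Submodule.smul_induction_on hx ?_ ?_
  · intro a ha m hm
    obtain ⟨c, -, hc⟩ := Submodule.mem_span_finset.mp ha
    refine ⟨fun g => c g • m, fun g _ => N.smul_mem _ hm, ?_⟩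
    rw [← hc, Finset.sum_smul]
    refine Finset.sum_congr rfl fun g _ => ?_
    simp [smul_smul, mul_comm]
  · rintro x y ⟨w, hw, rfl⟩ ⟨w', hw', rfl⟩
    exact ⟨w + w', fun g hg => N.add_mem (hw g hg) (hw' g hg), by
      simp [smul_add, Finset.sum_add_distrib]⟩

/-- If `I` is finitely generated and `y` in the adic completion has vanishing `n`-th
component, then `y ∈ Iⁿ • ⊤`. -/
lemma ker_eval_le_smul_top {T : Type*} [CommRing T] {I : Ideal T} (hI : I.FG)
    {M : Type*} [AddCommGroup M] [Module T M] (n : ℕ) (y : AdicCompletion I M)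
    (hy : y.val n = 0) : y ∈ (I ^ n • ⊤ : Submodule T (AdicCompletion I M)) := by
  classical
  obtain ⟨s, hs⟩ := Submodule.FG.pow hI n
  rw [Ideal.submodule_span_eq] at hs
  obtain ⟨f, rfl⟩ := AdicCompletion.mk_surjective I M y
  -- the `n`-th term lies in `Iⁿ • ⊤`
  have hfn : f.val n ∈ Ideal.span (s : Set T) • (⊤ : Submodule T M) := by
    rw [hs]
    simpa [Submodule.Quotient.mk_eq_zero] using hy
  obtain ⟨w₀, hw₀, hw₀eq⟩ := span_finset_smul_decomp s ⊤ hfn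
  -- the consecutive differences lie in `Iⁿ • (Iᵏ • ⊤)`
  have hd : ∀ k : ℕ, f.val (n + k + 1) - f.val (n + k) ∈
      Ideal.span (s : Set T) • (I ^ k • ⊤ : Submodule T M) := by
    intro k
    have h1 : f.val (n + k) ≡ f.val (n + k + 1) [SMOD (I ^ (n + k) • ⊤ : Submodule T M)] :=
      f.property (Nat.le_succ _)
    have h2 : f.val (n + k + 1) - f.val (n + k) ∈ (I ^ (n + k) • ⊤ : Submodule T M) := by
      rw [SModEq.sub_mem] at h1
      simpa using (I ^ (n + k) • ⊤ : Submodule T M).neg_mem h1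
    rwa [pow_add, ← hs, ← Ideal.smul_eq_mul, Submodule.smul_assoc] at h2
  choose w hw hweq using fun k => span_finset_smul_decomp s _ (hd k)
  -- partial sums, per generator
  set u : T → ℕ → M := fun g j => w₀ g + ∑ k ∈ Finset.range j, w k g with hu
  have hcauchy : ∀ g ∈ s, ∀ (j : ℕ), u g j ≡ u g (j + 1) [SMOD (I ^ j • ⊤ : Submodule T M)] := by
    intro g hg j
    rw [SModEq.sub_mem]
    have heq : u g j - u g (j + 1) = -(w j g) := by
      simp only [hu, Finset.sum_range_succ]
      abel
    rw [heq]
    exact (I ^ j • ⊤ : Submodule T M).neg_mem (hw j g hg)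
  -- the completed elements per generator
  let v : T → AdicCompletion I M := fun g =>
    if hg : g ∈ s then
      AdicCompletion.mk I M (AdicCompletion.AdicCauchySequence.mk I M (u g) (hcauchy g hg))
    else 0
  -- the key identity
  have hkey : AdicCompletion.mk I M f = ∑ g ∈ s, g • v g := by
    ext m
    rw [AdicCompletion.val_sum_apply]
    have hsum : ∑ g ∈ s, (g • v g).val m =
        Submodule.mkQ (I ^ m • ⊤ : Submodule T M) (∑ g ∈ s, g • u g m) := by
      rw [map_sum]
      refine Finset.sum_congr rfl fun g hg => ?_
      rw [AdicCompletion.val_smul]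
      simp only [v, dif_pos hg]
      rw [map_smul]
      rfl
    rw [hsum]
    have htel : ∑ g ∈ s, g • u g m = f.val (n + m) := by
      simp only [hu, smul_add, Finset.sum_add_distrib, Finset.smul_sum]
      rw [← hw₀eq, Finset.sum_comm]
      have : ∀ k ∈ Finset.range m, ∑ g ∈ s, g • w k g =
          f.val (n + k + 1) - f.val (n + k) := fun k _ => (hweq k).symm
      rw [Finset.sum_congr rfl this]
      have hts : ∑ x ∈ Finset.range m, (f.val (n + x + 1) - f.val (n + x)) =
          f.val (n + m) - f.val (n + 0) := by
        have h := Finset.sum_range_sub (fun k => f.val (n + k)) m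
        simpa [← Nat.add_assoc] using h
      rw [hts]
      simp
    rw [htel]
    have h := f.property (show m ≤ n + m by omega)
    rw [SModEq.def] at h
    exact h
  rw [hkey]
  refine Submodule.sum_mem _ fun g hg => ?_
  have hgI : g ∈ I ^ n := by
    rw [← hs]
    exact Ideal.subset_span hg
  exact Submodule.smul_mem_smul hgI Submodule.mem_top

/-- For a finitely generated ideal `I` of `T` and a `T`-module `M`, the canonical map
`M/IⁿM → M̂/IⁿM̂` into the `I`-adic completion is an isomorphism for every `n ≥ 1`:
equivalently, the composite `M → M̂ → M̂/IⁿM̂` is surjective with kernel `IⁿM`. -/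
theorem stmt2 {T : Type*} [CommRing T] (I : Ideal T) (hI : I.FG)
    (M : Type*) [AddCommGroup M] [Module T M] (n : ℕ) (hn : 1 ≤ n) :
    Function.Surjective
      ((Submodule.mkQ (I ^ n • ⊤ : Submodule T (AdicCompletion I M))).comp
        (AdicCompletion.of I M)) ∧
    LinearMap.ker ((Submodule.mkQ (I ^ n • ⊤ : Submodule T (AdicCompletion I M))).comp
        (AdicCompletion.of I M)) = (I ^ n • ⊤ : Submodule T M) := by
  constructor
  · intro x
    obtain ⟨y, rfl⟩ := Submodule.Quotient.mk_surjective _ x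
    obtain ⟨f, rfl⟩ := AdicCompletion.mk_surjective I M y
    refine ⟨f.val n, ?_⟩
    simp only [LinearMap.comp_apply, Submodule.mkQ_apply]
    rw [Submodule.Quotient.eq]
    refine ker_eval_le_smul_top hI n _ ?_
    simp
  · apply le_antisymm
    · intro m hm
      rw [LinearMap.mem_ker, LinearMap.comp_apply, Submodule.mkQ_apply,
        Submodule.Quotient.mk_eq_zero] at hm
      -- push membership through `eval n`
      have h1 : AdicCompletion.eval I M n (AdicCompletion.of I M m) ∈
          Submodule.map (AdicCompletion.eval I M n)
            (I ^ n • ⊤ : Submodule T (AdicCompletion I M)) :=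
        Submodule.mem_map_of_mem hm
      rw [Submodule.map_smul'', Submodule.map_top, AdicCompletion.range_eval] at h1
      have h2 : AdicCompletion.eval I M n (AdicCompletion.of I M m) ∈
          Submodule.map (Submodule.mkQ (I ^ n • ⊤ : Submodule T M))
            (I ^ n • ⊤ : Submodule T M) := by
        rw [Submodule.map_smul'', Submodule.map_top, Submodule.range_mkQ]
        exact h1
      have h3 : m ∈ Submodule.comap (Submodule.mkQ (I ^ n • ⊤ : Submodule T M))
          (Submodule.map (Submodule.mkQ (I ^ n • ⊤ : Submodule T M))
            (I ^ n • ⊤ : Submodule T M)) := h2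
      rwa [Submodule.comap_map_mkQ, sup_idem] at h3
    · intro m hm
      rw [LinearMap.mem_ker, LinearMap.comp_apply, Submodule.mkQ_apply,
        Submodule.Quotient.mk_eq_zero]
      have h1 : AdicCompletion.of I M m ∈
          Submodule.map (AdicCompletion.of I M) (I ^ n • ⊤ : Submodule T M) :=
        Submodule.mem_map_of_mem hm
      rw [Submodule.map_smul''] at h1
      exact Submodule.smul_mono le_rfl le_top h1
end

section
/- Let T = k[x₁,x₂,…] be a polynomial ring over a field k in countably many variables, I = (x₁,x₂,…), and T̂ the I-adic completion. Then the element x₁ + x₂x₃ + x₄x₅x₆ + ⋯ (the sum over n of the product x_{m_n+1}⋯x_{m_n+n} where the indices are consecutive and disjoint) lies in the closure Î of I·T̂ but not in the ideal of T̂ generated by x₁,x₂,…; in particular I·T̂ ≠ Î. -/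
open MvPolynomial

private lemma fdeg_single (i : ℕ) : Finsupp.degree (Finsupp.single i 1) = 1 := by
  exact Finsupp.degree_single i 1

private lemma fdeg_add (a b : ℕ →₀ ℕ) :
    Finsupp.degree (a + b) = Finsupp.degree a + Finsupp.degree b := by
  simp only [Finsupp.degree_eq_weight_one]
  exact map_add _ a b

private lemma fdeg_sum (s : Finset ℕ) (f : ℕ → (ℕ →₀ ℕ)) :
    Finsupp.degree (∑ j ∈ s, f j) = ∑ j ∈ s, Finsupp.degree (f j) := by
  classical
  induction s using Finset.induction with
  | empty => simp
  | insert _ _ h ih => rw [Finset.sum_insert h, Finset.sum_insert h, fdeg_add, ih]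

private lemma low_coeff {k : Type} [Field k] :
    ∀ (N : ℕ) (p : MvPolynomial ℕ k),
      p ∈ (Ideal.span (Set.range (X : ℕ → MvPolynomial ℕ k))) ^ N →
      ∀ d : ℕ →₀ ℕ, Finsupp.degree d < N → MvPolynomial.coeff d p = 0 := by
  intro N
  induction N with
  | zero => intro p _ d hd; omega
  | succ N ih =>
    intro p hp d hd
    rw [pow_succ] at hp
    refine Submodule.mul_induction_on hp (fun m hm n hn => ?_) (fun x y hx hy => ?_)
    · rw [MvPolynomial.coeff_mul]
      refine Finset.sum_eq_zero fun x hx => ?_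
      have hsum : x.1 + x.2 = d := Finset.HasAntidiagonal.mem_antidiagonal.mp hx
      by_cases h1 : Finsupp.degree x.1 < N
      · rw [ih m hm x.1 h1, zero_mul]
      · have hdadd : Finsupp.degree x.1 + Finsupp.degree x.2 = Finsupp.degree d := by
          rw [← fdeg_add, hsum]
        have h2 : Finsupp.degree x.2 = 0 := by omega
        have h2' : x.2 = 0 := (Finsupp.degree_eq_zero_iff _).mp h2
        have hker : MvPolynomial.coeff (0 : ℕ →₀ ℕ) n = 0 := by
          have hle : Ideal.span (Set.range (X : ℕ → MvPolynomial ℕ k)) ≤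
              RingHom.ker (constantCoeff (σ := ℕ) (R := k)) := by
            rw [Ideal.span_le]
            rintro _ ⟨i, rfl⟩
            simp [RingHom.mem_ker]
          simpa [MvPolynomial.constantCoeff_eq] using hle hn
        rw [h2', hker, mul_zero]
    · rw [MvPolynomial.coeff_add, hx, hy, add_zero]

private lemma prod_X_eq {k : Type} [Field k] (s : Finset ℕ) (f : ℕ → ℕ) :
    ∏ j ∈ s, (X (f j) : MvPolynomial ℕ k) =
      monomial (∑ j ∈ s, Finsupp.single (f j) 1) 1 := by
  classical
  induction s using Finset.induction with
  | empty => simp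
  | insert _ _ h ih =>
    rw [Finset.prod_insert h, Finset.sum_insert h, ih, X, monomial_mul, one_mul]

/-- In the `I`-adic completion `T̂` of `T = k[x₀,x₁,…]` at `I = (x₀,x₁,…)`, the element
`x₀ + x₁x₂ + x₃x₄x₅ + ⋯` (with partial sums `partialSum`) lies in the closure
`Î = ker(T̂ → T/I)` of `I·T̂`, but not in the ideal of `T̂` generated by the variables;
in particular `I·T̂ ≠ Î`. -/
theorem stmt3 (k : Type) [Field k] (I : Ideal (MvPolynomial ℕ k))
    (hI : I = Ideal.span (Set.range (X : ℕ → MvPolynomial ℕ k)))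
    (partialSum : ℕ → MvPolynomial ℕ k)
    (hpart : partialSum = fun N => ∑ n ∈ Finset.range N,
        ∏ j ∈ Finset.range (n + 1), X (n * (n + 1) / 2 + j)) :
    ∃ ξ : AdicCompletion I (MvPolynomial ℕ k),
      (∀ n : ℕ, ξ.val n = Submodule.Quotient.mk (partialSum n)) ∧
      ξ.val 1 = 0 ∧
      ξ ∉ Ideal.span (Set.range fun i : ℕ =>
        algebraMap (MvPolynomial ℕ k) (AdicCompletion I (MvPolynomial ℕ k)) (X i)) ∧
      ((Ideal.map (algebraMap (MvPolynomial ℕ k) (AdicCompletion I (MvPolynomial ℕ k))) I :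
          Set (AdicCompletion I (MvPolynomial ℕ k))) ≠
        {x : AdicCompletion I (MvPolynomial ℕ k) | x.val 1 = 0}) := by
  classical
  have hXI : ∀ i, (X i : MvPolynomial ℕ k) ∈ I := fun i => hI ▸ Ideal.subset_span ⟨i, rfl⟩
  have hsmul_top : ∀ N : ℕ, ((I ^ N • ⊤ : Ideal (MvPolynomial ℕ k)) :
      Submodule (MvPolynomial ℕ k) (MvPolynomial ℕ k)) = I ^ N := fun N => by
    rw [Ideal.smul_eq_mul, Ideal.mul_top]
  have hPmem : ∀ n : ℕ,
      (∏ j ∈ Finset.range (n + 1), X (n * (n + 1) / 2 + j) : MvPolynomial ℕ k)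
        ∈ I ^ (n + 1) := by
    intro n
    have h : I ^ (n + 1) = ∏ _j ∈ Finset.range (n + 1), I := by
      rw [Finset.prod_const, Finset.card_range]
    rw [h]
    exact Ideal.prod_mem_prod fun j _ => hXI _
  have hdiff : ∀ {m n : ℕ}, m ≤ n → partialSum n - partialSum m ∈ I ^ m := by
    intro m n hmn
    simp only [hpart]
    rw [← Finset.sum_Ico_eq_sub _ hmn]
    refine Ideal.sum_mem _ fun j hj => ?_
    have hjm : m ≤ j := (Finset.mem_Ico.mp hj).1
    exact Ideal.pow_le_pow_right (by omega) (hPmem j)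
  have hcompat : ∀ {m n : ℕ} (hmn : m ≤ n),
      AdicCompletion.transitionMap I (MvPolynomial ℕ k) hmn
        (Submodule.Quotient.mk (partialSum n)) = Submodule.Quotient.mk (partialSum m) := by
    intro m n hmn
    rw [AdicCompletion.transitionMap, Submodule.factorPow, ← Submodule.mkQ_apply,
      Submodule.factor_mk, Submodule.mkQ_apply, Submodule.Quotient.eq]
    rw [hsmul_top]
    exact hdiff hmn
  set ξ : AdicCompletion I (MvPolynomial ℕ k) :=
    ⟨fun n => Submodule.Quotient.mk (partialSum n), hcompat⟩ with hξ
  have hξval : ∀ n : ℕ, ξ.val n = Submodule.Quotient.mk (partialSum n) := fun n => rfl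
  have hval1 : ξ.val 1 = 0 := by
    rw [hξval]
    rw [Submodule.Quotient.mk_eq_zero, hsmul_top, pow_one]
    simp only [hpart]
    simpa using hXI 0
  -- the exponent monomials
  set Tn : ℕ → ℕ := fun m => m * (m + 1) / 2 with hTn
  set e : ℕ → (ℕ →₀ ℕ) := fun m => ∑ j ∈ Finset.range (m + 1), Finsupp.single (Tn m + j) 1
    with he
  have hdeg : ∀ m, Finsupp.degree (e m) = m + 1 := by
    intro m
    rw [he]
    simp only
    rw [fdeg_sum]
    simp [fdeg_single]
  have hcoeffPS : ∀ N m : ℕ, m < N →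
      MvPolynomial.coeff (e m) (partialSum N) = 1 := by
    intro N m hmN
    simp only [hpart]
    have hmono : ∀ m' : ℕ,
        (∏ j ∈ Finset.range (m' + 1), X (m' * (m' + 1) / 2 + j) : MvPolynomial ℕ k) =
          monomial (e m') 1 := fun m' => prod_X_eq _ _
    simp only [hmono]
    rw [MvPolynomial.coeff_sum]
    rw [Finset.sum_eq_single_of_mem m (Finset.mem_range.mpr hmN)]
    · rw [MvPolynomial.coeff_monomial, if_pos rfl]
    · intro b _ hbm
      rw [MvPolynomial.coeff_monomial, if_neg]
      intro hcontra
      have := hdeg b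
      rw [hcontra, hdeg m] at this
      omega
  have hezero : ∀ m i : ℕ, i < Tn m → (e m) i = 0 := by
    intro m i him
    rw [he]
    simp only
    rw [Finsupp.finset_sum_apply]
    refine Finset.sum_eq_zero fun j _ => ?_
    exact Finsupp.single_eq_of_ne (by omega)
  have hnot : ξ ∉ Ideal.span (Set.range fun i : ℕ =>
      algebraMap (MvPolynomial ℕ k) (AdicCompletion I (MvPolynomial ℕ k)) (X i)) := by
    intro hmem
    rw [← Ideal.submodule_span_eq, Finsupp.mem_span_range_iff_exists_finsupp] at hmem
    obtain ⟨c, hc⟩ := hmem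
    set n : ℕ := c.support.sup id + 1 with hn
    have hTnn : n ≤ Tn n := by
      rw [hTn]
      simp only
      rw [Nat.le_div_iff_mul_le (by norm_num)]
      nlinarith
    have hisupp : ∀ i ∈ c.support, i < Tn n := by
      intro i hi
      have h1 : i ≤ c.support.sup id := Finset.le_sup (f := id) hi
      omega
    set N : ℕ := n + 2 with hN
    have hc2 : (∑ i ∈ c.support, (X i : MvPolynomial ℕ k) • c i) = ξ := by
      rw [← hc, Finsupp.sum]
      refine Finset.sum_congr rfl fun i _ => ?_
      rw [Algebra.smul_def, mul_comm, ← smul_eq_mul]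
    have hval : ∑ i ∈ c.support, (X i : MvPolynomial ℕ k) • (c i).val N =
        Submodule.Quotient.mk (partialSum N) := by
      have := congrArg (fun z : AdicCompletion I (MvPolynomial ℕ k) => z.val N) hc2
      simpa only [AdicCompletion.val_sum_apply, AdicCompletion.val_smul_apply, hξval] using this
    choose g hg using fun i => Submodule.Quotient.mk_surjective
      ((I : Ideal (MvPolynomial ℕ k)) ^ N • ⊤ : Submodule (MvPolynomial ℕ k) (MvPolynomial ℕ k))
      ((c i).val N)
    have hq : (Submodule.Quotient.mk (∑ i ∈ c.support, X i * g i) :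
        MvPolynomial ℕ k ⧸ ((I : Ideal (MvPolynomial ℕ k)) ^ N • ⊤ :
          Submodule (MvPolynomial ℕ k) (MvPolynomial ℕ k))) =
        Submodule.Quotient.mk (partialSum N) := by
      rw [← hval, ← Submodule.mkQ_apply, map_sum]
      refine Finset.sum_congr rfl fun i _ => ?_
      rw [Submodule.mkQ_apply, ← hg i, ← Submodule.Quotient.mk_smul]; rfl
    rw [Submodule.Quotient.eq, hsmul_top] at hq
    have h0 := low_coeff N _ (by rw [← hI]; exact hq) (e n) (by rw [hdeg]; omega)
    rw [MvPolynomial.coeff_sub] at h0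
    rw [hcoeffPS N n (by omega)] at h0
    have hzero : MvPolynomial.coeff (e n) (∑ i ∈ c.support, X i * g i) = 0 := by
      rw [MvPolynomial.coeff_sum]
      refine Finset.sum_eq_zero fun i hi => ?_
      rw [MvPolynomial.coeff_X_mul', if_neg]
      rw [Finsupp.mem_support_iff]
      simp only [ne_eq, not_not]
      exact hezero n i (hisupp i hi)
    rw [hzero] at h0
    norm_num at h0
  refine ⟨ξ, hξval, hval1, hnot, ?_⟩
  intro h
  have hmem : ξ ∈ {x : AdicCompletion I (MvPolynomial ℕ k) | x.val 1 = 0} := hval1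
  rw [← h] at hmem
  have hspan : Ideal.map (algebraMap (MvPolynomial ℕ k)
      (AdicCompletion I (MvPolynomial ℕ k))) I =
      Ideal.span (Set.range fun i : ℕ =>
        algebraMap (MvPolynomial ℕ k) (AdicCompletion I (MvPolynomial ℕ k)) (X i)) := by
    rw [hI, Ideal.map_span, ← Set.range_comp]
    rfl
  exact hnot (by rw [← hspan]; exact hmem)
end
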